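/- Greedy selection of centers maximizing the cost-decrease yields an optimal (k,z)-clustering on an LCA-tree: if C_g is a set of k leaf centers obtained by iteratively placing, at each step, the optimal (1,z)-center of the unmarked subtree with maximum cost-decrease, then for every set C of k leaves, Cost_z(T, C_g) ≤ Cost_z(T, C), where Cost_z(T,C) = ∑ over leaves ℓ of min over c ∈ C of d(ℓ,c)^z. -/

import Mathlib

open Finset
open scoped Classical

/-!
Rooted trees are modeled as finite orders where `a ≤ b` means `b` is a (weak) ancestor
of `a`; the root is `⊤`, and the lowest common ancestor of `a` and `b` is `a ⊔ b`
(the ancestor sets being chains is the "tree" hypothesis `htree`).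
-/

variable {V : Type*}

/-- A leaf is a minimal node of the tree order. -/
def IsLeaf [PartialOrder V] (v : V) : Prop := ∀ w, w ≤ v → w = v

/-- The finset of leaves of the tree. -/
noncomputable def leavesF (V : Type*) [Fintype V] [PartialOrder V] : Finset V :=
  Finset.univ.filter IsLeaf

/-- The leaves of the subtree rooted at `η`. -/
noncomputable def subLeaves [Fintype V] [PartialOrder V] (η : V) : Finset V :=
  (leavesF V).filter (fun ℓ => ℓ ≤ η)

set_option linter.unusedSectionVars false

section Helpers
variable [Fintype V] [SemilatticeSup V] [OrderTop V]

noncomputable def mvf (val : V → ℝ) (S : Finset V) (ℓ : V) : ℝ :=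
  (insert ⊤ S).inf' (Finset.insert_nonempty _ _) (fun c => val (ℓ ⊔ c))

variable {val : V → ℝ}

lemma mvf_le_of_mem {S : Finset V} {x ℓ : V} (hx : x ∈ S) :
    mvf val S ℓ ≤ val (ℓ ⊔ x) :=
  Finset.inf'_le _ (Finset.mem_insert_of_mem hx)

lemma mvf_le_top {S : Finset V} {ℓ : V} : mvf val S ℓ ≤ val ⊤ := by
  have h := Finset.inf'_le (b := (⊤:V)) (fun c => val (ℓ ⊔ c)) (Finset.mem_insert_self _ S)
  rwa [sup_top_eq] at h

lemma le_mvf {S : Finset V} {ℓ : V} {m : ℝ} (htop : m ≤ val ⊤)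
    (h : ∀ x ∈ S, m ≤ val (ℓ ⊔ x)) : m ≤ mvf val S ℓ := by
  refine Finset.le_inf' _ _ ?_
  intro b hb
  rcases Finset.mem_insert.1 hb with rfl | hb
  · simpa using htop
  · exact h b hb

lemma mvf_mono {S T : Finset V} (h : S ⊆ T) (ℓ : V) : mvf val T ℓ ≤ mvf val S ℓ := by
  refine Finset.le_inf' _ _ ?_
  intro b hb
  exact Finset.inf'_le _ (Finset.insert_subset_insert _ h hb)

lemma mvf_insert {S : Finset V} {x ℓ : V} :
    mvf val (insert x S) ℓ = min (val (ℓ ⊔ x)) (mvf val S ℓ) := by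
  refine le_antisymm (le_min (mvf_le_of_mem (Finset.mem_insert_self _ _))
    (mvf_mono (Finset.subset_insert _ _) ℓ)) ?_
  refine le_mvf ((min_le_right _ _).trans mvf_le_top) ?_
  intro y hy
  rcases Finset.mem_insert.1 hy with rfl | hy
  · exact min_le_left _ _
  · exact (min_le_right _ _).trans (mvf_le_of_mem hy)

lemma mvf_nonneg (hval0 : ∀ v, 0 ≤ val v) (S : Finset V) (ℓ : V) : 0 ≤ mvf val S ℓ := by
  refine Finset.le_inf' _ _ ?_
  intro b _; exact hval0 _

end Helpers

section RealLemmas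

lemma minpow {z : ℕ} {a b d : ℝ} (ha : 0 ≤ a) (hb : 0 ≤ b) (hd : 0 ≤ d)
    (h : b ≤ a ∨ b ≤ d) : b ^ z - a ^ z ≤ min b d ^ z - min a d ^ z := by
  rcases h with h | h
  · rcases le_total d b with h1 | h1
    · have e1 : min b d = d := min_eq_right h1
      have e2 : min a d = d := min_eq_right (h1.trans h)
      rw [e1, e2]
      simp only [sub_self]
      have : b ^ z ≤ a ^ z := pow_le_pow_left₀ hb h z
      linarith
    · have e1 : min b d = b := min_eq_left h1
      rw [e1]
      rcases le_total d a with h2 | h2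
      · have e2 : min a d = d := min_eq_right h2
        rw [e2]
        have h3 : d ^ z ≤ a ^ z := pow_le_pow_left₀ hd h2 z
        linarith [pow_le_pow_left₀ hb h1 z]
      · rw [min_eq_left h2]
  · have e1 : min b d = b := min_eq_left h
    rw [e1]
    have h0 : 0 ≤ min a d := le_min ha hd
    have := pow_le_pow_left₀ h0 (min_le_left a d) z
    linarith

lemma losspow {z : ℕ} {b d p : ℝ} (hb : 0 ≤ b) (hd : 0 ≤ d)
    (hdp : d ≤ p) (hbp : b ≤ p) : d ^ z - min b d ^ z ≤ p ^ z - b ^ z := by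
  rcases le_total d b with h1 | h1
  · rw [min_eq_right h1]
    have := pow_le_pow_left₀ hb hbp z
    linarith
  · rw [min_eq_left h1]
    have := pow_le_pow_left₀ hd hdp z
    linarith

end RealLemmas

section OrderHelpers
variable [SemilatticeSup V] [OrderTop V]
variable (htree : ∀ v a b : V, v ≤ a → v ≤ b → a ≤ b ∨ b ≤ a)
include htree

lemma le_sup_of_not_le {ℓ x η : V} (hl : ℓ ≤ η) (hx : ¬ x ≤ η) : η ≤ ℓ ⊔ x := by
  rcases htree ℓ (ℓ ⊔ x) η le_sup_left hl with h | h
  · exact absurd (le_sup_right.trans h) hx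
  · exact h

lemma parent_le_of_lt (parent : V → V) (hpar : ∀ v : V, v ≠ ⊤ → v ⋖ parent v)
    {η a : V} (hη : η ≠ ⊤) (h1 : η ≤ a) (h2 : a ≠ η) : parent η ≤ a := by
  have hc := hpar η hη
  rcases htree η a (parent η) h1 hc.lt.le with h | h
  · rcases eq_or_lt_of_le h with rfl | hlt
    · exact le_rfl
    · exact absurd hlt (hc.2 (lt_of_le_of_ne h1 (Ne.symm h2)))
  · exact h

lemma le_sup_sup (ℓ : V) {x y s : V} (h : s ≤ x ⊔ y) : s ≤ ℓ ⊔ x ∨ s ≤ ℓ ⊔ y := by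
  rcases htree ℓ (ℓ ⊔ x) (ℓ ⊔ y) le_sup_left le_sup_left with hc | hc
  · right
    exact h.trans (sup_le (le_sup_right.trans hc) le_sup_right)
  · left
    exact h.trans (sup_le le_sup_right (le_sup_right.trans hc))

lemma exists_max_prop [Fintype V] (P : V → Prop) {o : V} (ho : P o) :
    ∃ η, o ≤ η ∧ P η ∧ ∀ a, o ≤ a → P a → a ≤ η := by
  classical
  have hne : (Finset.univ.filter (fun a => o ≤ a ∧ P a)).Nonempty :=
    ⟨o, by simp [ho]⟩
  obtain ⟨m, hm, hmax'⟩ := Finset.exists_maximal hne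
  replace hm : m ∈ Finset.univ.filter (fun a => o ≤ a ∧ P a) := hm
  have hmax : ∀ x ∈ Finset.univ.filter (fun a => o ≤ a ∧ P a), ¬ m < x :=
    fun x hx hlt => hlt.not_ge (hmax' hx hlt.le)
  rw [Finset.mem_filter] at hm
  refine ⟨m, hm.2.1, hm.2.2, ?_⟩
  intro a hoa hPa
  have haS : a ∈ Finset.univ.filter (fun a => o ≤ a ∧ P a) := by
    simp [hoa, hPa]
  rcases htree o a m hoa hm.2.1 with h | h
  · exact h
  · rcases eq_or_lt_of_le h with rfl | hlt
    · exact le_rfl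
    · exact absurd hlt (hmax a haS)

end OrderHelpers

lemma exchange [Fintype V] [SemilatticeSup V] [OrderTop V]
    (htree : ∀ v a b : V, v ≤ a → v ≤ b → a ≤ b ∨ b ≤ a)
    (val : V → ℝ) (hval0 : ∀ v, 0 ≤ val v)
    (hmono : ∀ a b : V, a ≤ b → val a ≤ val b)
    (parent : V → V) (hpar : ∀ v : V, v ≠ ⊤ → v ⋖ parent v)
    (z : ℕ)
    (hbe : ∀ η : V, (subLeaves η).Nonempty)
    (Lg : List V) (i : ℕ) (hik : i < Lg.length)
    (hg : ∃ η : V,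
        (¬ ∃ c ∈ Lg.take i, c ≤ η) ∧
        (η = ⊤ ∨ ((∃ c ∈ Lg.take i, c ≤ parent η) ∧
          ∀ μ : V, μ ≠ ⊤ → (¬ ∃ c ∈ Lg.take i, c ≤ μ) →
            ((subLeaves μ).card : ℝ) * val (parent μ) ^ z -
                (subLeaves μ).inf' (hbe μ) (fun c => ∑ ℓ ∈ subLeaves μ, val (ℓ ⊔ c) ^ z) ≤
              ((subLeaves η).card : ℝ) * val (parent η) ^ z -
                (subLeaves η).inf' (hbe η) (fun c => ∑ ℓ ∈ subLeaves η, val (ℓ ⊔ c) ^ z))) ∧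
        Lg.get ⟨i, hik⟩ ∈ subLeaves η ∧
        (∀ c' ∈ subLeaves η,
          ∑ ℓ ∈ subLeaves η, val (ℓ ⊔ Lg.get ⟨i, hik⟩) ^ z ≤
            ∑ ℓ ∈ subLeaves η, val (ℓ ⊔ c') ^ z))
    (C : Finset V) (hCne : C.Nonempty) (hCleaf : ∀ c ∈ C, IsLeaf c) :
    ∃ o ∈ C,
      ∑ ℓ ∈ leavesF V,
          mvf val (insert (Lg.get ⟨i, hik⟩) ((Lg.take i).toFinset ∪ C.erase o)) ℓ ^ z ≤
        ∑ ℓ ∈ leavesF V, mvf val ((Lg.take i).toFinset ∪ C) ℓ ^ z := by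
  obtain ⟨η, hunm, hgcase, hc1mem, hc1opt⟩ := hg
  set c₁ := Lg.get ⟨i, hik⟩ with hc₁def
  set M := (Lg.take i).toFinset with hMdef
  have hunmM : ∀ c ∈ M, ¬ c ≤ η := fun c hc hle => hunm ⟨c, List.mem_toFinset.1 hc, hle⟩
  have hc1le : c₁ ≤ η := (Finset.mem_filter.1 hc1mem).2
  have hc1leaf : IsLeaf c₁ := (Finset.mem_filter.1 (Finset.mem_filter.1 hc1mem).1).2
  -- generic "outside subtree" bound
  have hout_gen : ∀ η' : V, η' ≠ ⊤ → (∀ c ∈ M, ¬ c ≤ η') → ∀ c₀' ∈ M, c₀' ≤ parent η' →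
      ∀ ℓ x : V, ¬ ℓ ≤ η' → x ≤ η' → mvf val M ℓ ≤ val (ℓ ⊔ x) := by
    intro η' hT hunm' c₀' hc₀'M hc₀'p ℓ x hl hx
    have hηlx : η' ≤ ℓ ⊔ x :=
      (le_sup_of_not_le htree hx hl).trans (sup_le le_sup_right le_sup_left)
    have hne : ℓ ⊔ x ≠ η' := fun h => hl (h ▸ le_sup_left)
    have hp : parent η' ≤ ℓ ⊔ x := parent_le_of_lt htree parent hpar hT hηlx hne
    exact (mvf_le_of_mem hc₀'M).trans (hmono _ _ (sup_le le_sup_left (hc₀'p.trans hp)))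
  have hpv_gen : ∀ η' : V, η' ≠ ⊤ → (∀ c ∈ M, ¬ c ≤ η') → ∀ c₀' ∈ M, c₀' ≤ parent η' →
      ∀ ℓ : V, ℓ ≤ η' → mvf val M ℓ = val (parent η') := by
    intro η' hT hunm' c₀' hc₀'M hc₀'p ℓ hl
    refine le_antisymm ((mvf_le_of_mem hc₀'M).trans
      (hmono _ _ (sup_le (hl.trans (hpar η' hT).lt.le) hc₀'p))) ?_
    refine le_mvf (hmono _ _ le_top) ?_
    intro x hx
    refine hmono _ _ ?_
    have h1 : η' ≤ ℓ ⊔ x := le_sup_of_not_le htree hl (hunm' x hx)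
    exact parent_le_of_lt htree parent hpar hT h1
      (fun h => (hunm' x hx) (h ▸ (le_sup_right : x ≤ ℓ ⊔ x)))
  have hout : ∀ ℓ x : V, ¬ ℓ ≤ η → x ≤ η → mvf val M ℓ ≤ val (ℓ ⊔ x) := by
    intro ℓ x hl hx
    have hT : η ≠ ⊤ := by
      intro h; subst h; exact hl le_top
    rcases hgcase with h | ⟨⟨c₀, hc₀L, hc₀p⟩, _⟩
    · exact absurd h hT
    exact hout_gen η hT hunmM c₀ (List.mem_toFinset.2 hc₀L) hc₀p ℓ x hl hx
  by_cases hA : ∃ c ∈ C, c ≤ η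
  · -- CASE A : some element of C lies in the subtree of η
    obtain ⟨c', hc'C, hc'le⟩ := hA
    have hSne : (C.filter (fun c => c ≤ η)).Nonempty := ⟨c', Finset.mem_filter.2 ⟨hc'C, hc'le⟩⟩
    obtain ⟨s0, hs0mem, hs0min'⟩ :=
      Finset.exists_minimal (s := (C.filter (fun c => c ≤ η)).image (fun c => c ⊔ c₁)) (hSne.image _)
    replace hs0mem : s0 ∈ (C.filter (fun c => c ≤ η)).image (fun c => c ⊔ c₁) := hs0mem
    have hs0min : ∀ x ∈ (C.filter (fun c => c ≤ η)).image (fun c => c ⊔ c₁), ¬ x < s0 :=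
      fun x hx hlt => hlt.not_ge (hs0min' hx hlt.le)
    obtain ⟨o, hoS, hos⟩ := Finset.mem_image.1 hs0mem
    have hoC : o ∈ C := (Finset.mem_filter.1 hoS).1
    have hoη : o ≤ η := (Finset.mem_filter.1 hoS).2
    have holeaf : IsLeaf o := hCleaf o hoC
    refine ⟨o, hoC, ?_⟩
    set s := o ⊔ c₁ with hsdef
    have hsη : s ≤ η := sup_le hoη hc1le
    have hmins : ∀ c ∈ C, c ≤ η → s ≤ c ⊔ c₁ := by
      intro c hc hcle
      have hmem : c ⊔ c₁ ∈ (C.filter (fun c => c ≤ η)).image (fun c => c ⊔ c₁) :=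
        Finset.mem_image_of_mem _ (Finset.mem_filter.2 ⟨hc, hcle⟩)
      rcases htree c₁ s (c ⊔ c₁) le_sup_right le_sup_right with h | h
      · exact h
      · rcases eq_or_lt_of_le h with heq | hlt
        · exact le_of_eq heq.symm
        · exact absurd (hos ▸ hlt) (hs0min _ hmem)
    set D := M ∪ C.erase o with hDdef
    have hins : insert o D = M ∪ C := by
      rw [hDdef, ← Finset.union_insert, Finset.insert_erase hoC]
    have hDM : M ⊆ D := Finset.subset_union_left
    have hsupeq : ∀ ℓ : V, ¬ ℓ ≤ s → ℓ ⊔ c₁ = ℓ ⊔ o := by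
      intro ℓ hls
      have h1 : s ≤ ℓ ⊔ c₁ :=
        (le_sup_of_not_le htree (le_sup_right : c₁ ≤ s) hls).trans
          (sup_le le_sup_right le_sup_left)
      have h2 : s ≤ ℓ ⊔ o :=
        (le_sup_of_not_le htree (le_sup_left : o ≤ s) hls).trans
          (sup_le le_sup_right le_sup_left)
      have e1 : ℓ ⊔ c₁ = ℓ ⊔ s :=
        le_antisymm (sup_le le_sup_left ((le_sup_right : c₁ ≤ s).trans le_sup_right))
          (sup_le le_sup_left h1)
      have e2 : ℓ ⊔ o = ℓ ⊔ s :=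
        le_antisymm (sup_le le_sup_left ((le_sup_left : o ≤ s).trans le_sup_right))
          (sup_le le_sup_left h2)
      rw [e1, e2]
    have hdkey : ∀ ℓ : V, ℓ ≤ s → ℓ ⊔ c₁ < s → val s ≤ mvf val D ℓ := by
      intro ℓ hls hlt
      refine le_mvf (hmono _ _ le_top) ?_
      intro x hx
      refine hmono _ _ ?_
      rcases Finset.mem_union.1 hx with hxM | hxC
      · exact hsη.trans (le_sup_of_not_le htree (hls.trans hsη) (hunmM x hxM))
      · have hxC' : x ∈ C := Finset.mem_of_mem_erase hxC
        by_cases hxη : x ≤ η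
        · rcases le_sup_sup htree ℓ (hmins x hxC' hxη) with h | h
          · exact h
          · exact absurd h (not_le_of_gt hlt)
        · exact hsη.trans (le_sup_of_not_le htree (hls.trans hsη) hxη)
    have hkey : ∀ ℓ : V, ℓ ≤ s →
        val (ℓ ⊔ o) ^ z - val (ℓ ⊔ c₁) ^ z ≤
          min (val (ℓ ⊔ o)) (mvf val D ℓ) ^ z - min (val (ℓ ⊔ c₁)) (mvf val D ℓ) ^ z := by
      intro ℓ hls
      refine minpow (hval0 _) (hval0 _) (mvf_nonneg hval0 _ _) ?_
      have hlo : ℓ ⊔ o ≤ s := sup_le hls le_sup_left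
      have hlc : ℓ ⊔ c₁ ≤ s := sup_le hls le_sup_right
      rcases eq_or_lt_of_le hlc with heq | hlt
      · left
        rw [heq]
        exact hmono _ _ hlo
      · right
        exact (hmono _ _ hlo).trans (hdkey ℓ hls hlt)
    have hterm : ∀ ℓ : V, ¬ ℓ ≤ s →
        min (val (ℓ ⊔ c₁)) (mvf val D ℓ) = min (val (ℓ ⊔ o)) (mvf val D ℓ) := by
      intro ℓ hls
      by_cases hlη : ℓ ≤ η
      · rw [hsupeq ℓ hls]
      · have hd1 : mvf val D ℓ ≤ val (ℓ ⊔ c₁) := (mvf_mono hDM ℓ).trans (hout ℓ c₁ hlη hc1le)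
        have hd2 : mvf val D ℓ ≤ val (ℓ ⊔ o) := (mvf_mono hDM ℓ).trans (hout ℓ o hlη hoη)
        rw [min_eq_right hd1, min_eq_right hd2]
    have hoSub : o ∈ subLeaves η :=
      Finset.mem_filter.2 ⟨Finset.mem_filter.2 ⟨Finset.mem_univ _, holeaf⟩, hoη⟩
    have hgη := hc1opt o hoSub
    have hfs : (subLeaves η).filter (fun ℓ => ℓ ≤ s) = subLeaves s := by
      ext ℓ
      simp only [subLeaves, Finset.mem_filter]
      exact ⟨fun h => ⟨h.1.1, h.2⟩, fun h => ⟨⟨h.1, h.2.trans hsη⟩, h.2⟩⟩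
    have hoff : ∀ ℓ ∈ (subLeaves η).filter (fun ℓ => ¬ ℓ ≤ s),
        val (ℓ ⊔ c₁) ^ z = val (ℓ ⊔ o) ^ z := by
      intro ℓ hl
      rw [hsupeq ℓ (Finset.mem_filter.1 hl).2]
    have hsum : ∑ ℓ ∈ subLeaves s, val (ℓ ⊔ c₁) ^ z ≤ ∑ ℓ ∈ subLeaves s, val (ℓ ⊔ o) ^ z := by
      have h1 := Finset.sum_filter_add_sum_filter_not (subLeaves η) (fun ℓ => ℓ ≤ s)
        (fun ℓ => val (ℓ ⊔ c₁) ^ z)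
      have h2 := Finset.sum_filter_add_sum_filter_not (subLeaves η) (fun ℓ => ℓ ≤ s)
        (fun ℓ => val (ℓ ⊔ o) ^ z)
      have h3 := Finset.sum_congr rfl hoff
      rw [hfs] at h1 h2
      linarith [hgη]
    rw [← hins]
    have hL := Finset.sum_filter_add_sum_filter_not (leavesF V) (fun ℓ => ℓ ≤ s)
      (fun ℓ => mvf val (insert c₁ D) ℓ ^ z)
    have hR := Finset.sum_filter_add_sum_filter_not (leavesF V) (fun ℓ => ℓ ≤ s)
      (fun ℓ => mvf val (insert o D) ℓ ^ z)
    have hfl : (leavesF V).filter (fun ℓ => ℓ ≤ s) = subLeaves s := rfl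
    have hEq2 : ∑ ℓ ∈ (leavesF V).filter (fun ℓ => ¬ ℓ ≤ s), mvf val (insert c₁ D) ℓ ^ z
        = ∑ ℓ ∈ (leavesF V).filter (fun ℓ => ¬ ℓ ≤ s), mvf val (insert o D) ℓ ^ z := by
      refine Finset.sum_congr rfl ?_
      intro ℓ hl
      rw [mvf_insert, mvf_insert, hterm ℓ (Finset.mem_filter.1 hl).2]
    have hMain : ∑ ℓ ∈ subLeaves s, mvf val (insert c₁ D) ℓ ^ z ≤
        ∑ ℓ ∈ subLeaves s, mvf val (insert o D) ℓ ^ z := by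
      have hstep : ∀ ℓ ∈ subLeaves s,
          mvf val (insert c₁ D) ℓ ^ z + (val (ℓ ⊔ o) ^ z - val (ℓ ⊔ c₁) ^ z)
            ≤ mvf val (insert o D) ℓ ^ z := by
        intro ℓ hl
        have hls : ℓ ≤ s := (Finset.mem_filter.1 hl).2
        rw [mvf_insert, mvf_insert]
        linarith [hkey ℓ hls]
      have h := Finset.sum_le_sum hstep
      rw [Finset.sum_add_distrib, Finset.sum_sub_distrib] at h
      linarith [hsum]
    rw [← hL, ← hR, hfl]
    linarith [hEq2, hMain]
  · -- CASE B : no element of C lies in the subtree of η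
    push_neg at hA
    obtain ⟨o, hoC⟩ := hCne
    have holeaf : IsLeaf o := hCleaf o hoC
    refine ⟨o, hoC, ?_⟩
    set D := M ∪ C.erase o with hDdef
    have hins : insert o D = M ∪ C := by
      rw [hDdef, ← Finset.union_insert, Finset.insert_erase hoC]
    rw [← hins]
    have hDM : M ⊆ D := Finset.subset_union_left
    have hηT : η ≠ ⊤ := by
      intro h; subst h; exact hA o hoC le_top
    rcases hgcase with h | ⟨⟨c₀, hc₀L, hc₀p⟩, hmax⟩
    · exact absurd h hηT
    have hc₀M : c₀ ∈ M := List.mem_toFinset.2 hc₀L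
    have hpv : ∀ ℓ : V, ℓ ≤ η → mvf val M ℓ = val (parent η) :=
      hpv_gen η hηT hunmM c₀ hc₀M hc₀p
    have hd_in : ∀ ℓ : V, ℓ ≤ η → mvf val D ℓ = val (parent η) := by
      intro ℓ hl
      refine le_antisymm ((mvf_mono hDM ℓ).trans (le_of_eq (hpv ℓ hl))) ?_
      refine le_mvf (hmono _ _ le_top) ?_
      intro x hx
      rcases Finset.mem_union.1 hx with hxM | hxC
      · rw [← hpv ℓ hl]
        exact mvf_le_of_mem hxM
      · have hxη := hA x (Finset.mem_of_mem_erase hxC)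
        refine hmono _ _ (parent_le_of_lt htree parent hpar hηT
          (le_sup_of_not_le htree hl hxη)
          (fun h => hxη (h ▸ (le_sup_right : x ≤ ℓ ⊔ x))))
    -- inside bound
    have hIn : ∀ ℓ : V, ℓ ≤ η →
        mvf val (insert c₁ D) ℓ ^ z + (val (parent η) ^ z - val (ℓ ⊔ c₁) ^ z) ≤
          mvf val (insert o D) ℓ ^ z := by
      intro ℓ hl
      rw [mvf_insert, mvf_insert, hd_in ℓ hl]
      have hb : val (parent η) ≤ val (ℓ ⊔ o) := by
        refine hmono _ _ (parent_le_of_lt htree parent hpar hηT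
          (le_sup_of_not_le htree hl (hA o hoC))
          (fun h => (hA o hoC) (h ▸ (le_sup_right : o ≤ ℓ ⊔ o))))
      have ha : val (ℓ ⊔ c₁) ≤ val (parent η) :=
        hmono _ _ ((sup_le hl hc1le).trans (hpar η hηT).lt.le)
      rw [min_eq_right hb, min_eq_left ha]
      linarith
    by_cases homark : ∃ c ∈ Lg.take i, c ≤ o
    · -- o is already a greedy center: the new center can only help
      obtain ⟨c, hcL, hco⟩ := homark
      have hceq : c = o := holeaf c hco
      subst hceq
      have hoM : c ∈ M := List.mem_toFinset.2 hcL
      refine Finset.sum_le_sum ?_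
      intro ℓ _
      refine pow_le_pow_left₀ (mvf_nonneg hval0 _ _) ?_ z
      rw [mvf_insert, mvf_insert]
      have hdb : mvf val D ℓ ≤ val (ℓ ⊔ c) := mvf_le_of_mem (Finset.mem_union_left _ hoM)
      rw [min_eq_right hdb]
      exact min_le_right _ _
    · -- o is unmarked: exchange via its maximal unmarked ancestor
      obtain ⟨ηo, hoηo, hηounm, hηomax⟩ :=
        exists_max_prop htree (fun a => ¬ ∃ c ∈ Lg.take i, c ≤ a) homark
      have hηoT : ηo ≠ ⊤ := by
        intro h; subst h; exact hηounm ⟨c₀, hc₀L, le_top⟩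
      have hunmMo : ∀ c ∈ M, ¬ c ≤ ηo := fun c hc hle => hηounm ⟨c, List.mem_toFinset.1 hc, hle⟩
      have hparmark : ∃ c ∈ Lg.take i, c ≤ parent ηo := by
        by_contra hcon
        have h := hηomax (parent ηo) (hoηo.trans (hpar ηo hηoT).lt.le) hcon
        exact absurd h (hpar ηo hηoT).lt.not_ge
      obtain ⟨c₀', hc₀'L, hc₀'p⟩ := hparmark
      have hc₀'M : c₀' ∈ M := List.mem_toFinset.2 hc₀'L
      have hpvo : ∀ ℓ : V, ℓ ≤ ηo → mvf val M ℓ = val (parent ηo) :=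
        hpv_gen ηo hηoT hunmMo c₀' hc₀'M hc₀'p
      have hdisj : ∀ ℓ : V, ℓ ≤ ηo → ¬ ℓ ≤ η := by
        intro ℓ hl1 hl2
        rcases htree ℓ ηo η hl1 hl2 with h | h
        · exact hA o hoC (hoηo.trans h)
        · rcases eq_or_lt_of_le h with heq | hlt
          · exact hA o hoC (le_of_le_of_eq hoηo heq.symm)
          · have hp : parent η ≤ ηo :=
              parent_le_of_lt htree parent hpar hηT hlt.le hlt.ne'
            exact hunmMo c₀ hc₀M (hc₀p.trans hp)
      -- outside terms, away from subtree ηo : equal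
      have hOut1 : ∀ ℓ : V, ¬ ℓ ≤ η → ¬ ℓ ≤ ηo →
          mvf val (insert c₁ D) ℓ = mvf val (insert o D) ℓ := by
        intro ℓ h1 h2
        rw [mvf_insert, mvf_insert]
        have hd1 : mvf val D ℓ ≤ val (ℓ ⊔ c₁) := (mvf_mono hDM ℓ).trans (hout ℓ c₁ h1 hc1le)
        have hd2 : mvf val D ℓ ≤ val (ℓ ⊔ o) :=
          (mvf_mono hDM ℓ).trans (hout_gen ηo hηoT hunmMo c₀' hc₀'M hc₀'p ℓ o h2 hoηo)
        rw [min_eq_right hd1, min_eq_right hd2]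
      -- inside subtree ηo : bounded loss
      have hOut2 : ∀ ℓ : V, ℓ ≤ ηo →
          mvf val (insert c₁ D) ℓ ^ z ≤
            mvf val (insert o D) ℓ ^ z + (val (parent ηo) ^ z - val (ℓ ⊔ o) ^ z) := by
        intro ℓ hl
        rw [mvf_insert, mvf_insert]
        have hnc1 : ¬ c₁ ≤ ηo := fun h => hdisj c₁ h hc1le
        have ha : mvf val D ℓ ≤ val (ℓ ⊔ c₁) := by
          refine (mvf_mono hDM ℓ).trans ?_
          rw [hpvo ℓ hl]
          refine hmono _ _ (parent_le_of_lt htree parent hpar hηoT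
            (le_sup_of_not_le htree hl hnc1)
            (fun h => hnc1 (h ▸ (le_sup_right : c₁ ≤ ℓ ⊔ c₁))))
        rw [min_eq_right ha]
        have hdp : mvf val D ℓ ≤ val (parent ηo) := (mvf_mono hDM ℓ).trans (le_of_eq (hpvo ℓ hl))
        have hbp : val (ℓ ⊔ o) ≤ val (parent ηo) :=
          hmono _ _ ((sup_le hl hoηo).trans (hpar ηo hηoT).lt.le)
        have h := losspow (z := z) (hval0 _) (mvf_nonneg hval0 D ℓ) hdp hbp
        linarith only [h]
      -- the greedy bound : loss in subtree ηo is at most the gain in subtree η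
      have hoSubo : o ∈ subLeaves ηo :=
        Finset.mem_filter.2 ⟨Finset.mem_filter.2 ⟨Finset.mem_univ _, holeaf⟩, hoηo⟩
      have hgbound : ∑ ℓ ∈ subLeaves ηo, (val (parent ηo) ^ z - val (ℓ ⊔ o) ^ z) ≤
          ∑ ℓ ∈ subLeaves η, (val (parent η) ^ z - val (ℓ ⊔ c₁) ^ z) := by
        have h1 := hmax ηo hηoT hηounm
        have hinfo : (subLeaves ηo).inf' (hbe ηo)
            (fun c => ∑ ℓ ∈ subLeaves ηo, val (ℓ ⊔ c) ^ z) ≤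
              ∑ ℓ ∈ subLeaves ηo, val (ℓ ⊔ o) ^ z := Finset.inf'_le _ hoSubo
        have hinfη : (subLeaves η).inf' (hbe η)
            (fun c => ∑ ℓ ∈ subLeaves η, val (ℓ ⊔ c) ^ z) =
              ∑ ℓ ∈ subLeaves η, val (ℓ ⊔ c₁) ^ z :=
          le_antisymm (Finset.inf'_le _ hc1mem) (Finset.le_inf' _ _ hc1opt)
        rw [Finset.sum_sub_distrib, Finset.sum_sub_distrib, Finset.sum_const,
          Finset.sum_const, nsmul_eq_mul, nsmul_eq_mul]
        rw [hinfη] at h1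
        linarith
      -- assemble
      have hLsplit := Finset.sum_filter_add_sum_filter_not (leavesF V) (fun ℓ => ℓ ≤ η)
        (fun ℓ => mvf val (insert c₁ D) ℓ ^ z)
      have hRsplit := Finset.sum_filter_add_sum_filter_not (leavesF V) (fun ℓ => ℓ ≤ η)
        (fun ℓ => mvf val (insert o D) ℓ ^ z)
      have hflη : (leavesF V).filter (fun ℓ => ℓ ≤ η) = subLeaves η := rfl
      have hP1 : ∑ ℓ ∈ subLeaves η, mvf val (insert c₁ D) ℓ ^ z +
          ∑ ℓ ∈ subLeaves η, (val (parent η) ^ z - val (ℓ ⊔ c₁) ^ z) ≤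
            ∑ ℓ ∈ subLeaves η, mvf val (insert o D) ℓ ^ z := by
        rw [← Finset.sum_add_distrib]
        refine Finset.sum_le_sum ?_
        intro ℓ hl
        exact hIn ℓ (Finset.mem_filter.1 hl).2
      -- split the outside part by subtree ηo
      set T := (leavesF V).filter (fun ℓ => ¬ ℓ ≤ η) with hTdef
      have hT1 := Finset.sum_filter_add_sum_filter_not T (fun ℓ => ℓ ≤ ηo)
        (fun ℓ => mvf val (insert c₁ D) ℓ ^ z)
      have hT2 := Finset.sum_filter_add_sum_filter_not T (fun ℓ => ℓ ≤ ηo)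
        (fun ℓ => mvf val (insert o D) ℓ ^ z)
      have hTQ : T.filter (fun ℓ => ℓ ≤ ηo) = subLeaves ηo := by
        ext ℓ
        simp only [hTdef, subLeaves, Finset.mem_filter]
        constructor
        · rintro ⟨⟨h1, _⟩, h3⟩
          exact ⟨h1, h3⟩
        · rintro ⟨h1, h2⟩
          exact ⟨⟨h1, hdisj ℓ h2⟩, h2⟩
      have hP2 : ∑ ℓ ∈ T, mvf val (insert c₁ D) ℓ ^ z ≤
          ∑ ℓ ∈ T, mvf val (insert o D) ℓ ^ z +
            ∑ ℓ ∈ subLeaves ηo, (val (parent ηo) ^ z - val (ℓ ⊔ o) ^ z) := by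
        have hq1 : ∑ ℓ ∈ T.filter (fun ℓ => ℓ ≤ ηo), mvf val (insert c₁ D) ℓ ^ z ≤
            ∑ ℓ ∈ T.filter (fun ℓ => ℓ ≤ ηo), mvf val (insert o D) ℓ ^ z +
              ∑ ℓ ∈ subLeaves ηo, (val (parent ηo) ^ z - val (ℓ ⊔ o) ^ z) := by
          rw [hTQ, ← Finset.sum_add_distrib]
          refine Finset.sum_le_sum ?_
          intro ℓ hl
          exact hOut2 ℓ (Finset.mem_filter.1 hl).2
        have hq2 : ∑ ℓ ∈ T.filter (fun ℓ => ¬ ℓ ≤ ηo), mvf val (insert c₁ D) ℓ ^ z =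
            ∑ ℓ ∈ T.filter (fun ℓ => ¬ ℓ ≤ ηo), mvf val (insert o D) ℓ ^ z := by
          refine Finset.sum_congr rfl ?_
          intro ℓ hl
          have h1 := Finset.mem_filter.1 hl
          have h2 := Finset.mem_filter.1 h1.1
          rw [hOut1 ℓ h2.2 h1.2]
        linarith
      rw [← hLsplit, ← hRsplit, hflη]
      linarith [hP1, hP2, hgbound]


/-- Greedy selection of centers maximizing the cost-decrease yields an optimal
(k,z)-clustering on an LCA-tree: if the list `Lg` of `k` leaf centers is built by
iteratively placing the optimal (1,z)-center of the unmarked subtree of maximum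
cost-decrease, then its (k,z)-clustering cost is at most that of any set of `k`
leaves. -/
theorem stmt19 [Fintype V] [SemilatticeSup V] [OrderTop V]
    (htree : ∀ v a b : V, v ≤ a → v ≤ b → a ≤ b ∨ b ≤ a)
    (val : V → ℝ) (hval0 : ∀ v, 0 ≤ val v)
    (hmono : ∀ a b : V, a ≤ b → val a ≤ val b)
    (parent : V → V) (hpar : ∀ v : V, v ≠ ⊤ → v ⋖ parent v)
    (z : ℕ) (hz : 1 ≤ z)
    (hbe : ∀ η : V, (subLeaves η).Nonempty)
    (k : ℕ) (hk : 0 < k)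
    (Lg : List V) (hlen : Lg.length = k) (hleaf : ∀ c ∈ Lg, IsLeaf c)
    (hgreedy : ∀ (i : ℕ) (hi : i < Lg.length),
      ∃ η : V,
        -- η is unmarked by the previously placed centers
        (¬ ∃ c ∈ Lg.take i, c ≤ η) ∧
        -- η is the root, or its parent is marked and it maximizes the cost-decrease
        -- among unmarked (non-root) nodes
        (η = ⊤ ∨ ((∃ c ∈ Lg.take i, c ≤ parent η) ∧
          ∀ μ : V, μ ≠ ⊤ → (¬ ∃ c ∈ Lg.take i, c ≤ μ) →
            ((subLeaves μ).card : ℝ) * val (parent μ) ^ z -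
                (subLeaves μ).inf' (hbe μ) (fun c => ∑ ℓ ∈ subLeaves μ, val (ℓ ⊔ c) ^ z) ≤
              ((subLeaves η).card : ℝ) * val (parent η) ^ z -
                (subLeaves η).inf' (hbe η) (fun c => ∑ ℓ ∈ subLeaves η, val (ℓ ⊔ c) ^ z))) ∧
        -- the i-th center is an optimal (1,z)-center of the subtree rooted at η
        Lg.get ⟨i, hi⟩ ∈ subLeaves η ∧
        (∀ c' ∈ subLeaves η,
          ∑ ℓ ∈ subLeaves η, val (ℓ ⊔ Lg.get ⟨i, hi⟩) ^ z ≤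
            ∑ ℓ ∈ subLeaves η, val (ℓ ⊔ c') ^ z))
    (hgne : Lg.toFinset.Nonempty) :
    ∀ (C : Finset V) (hC : C.Nonempty), (∀ c ∈ C, IsLeaf c) → C.card = k →
      ∑ ℓ ∈ leavesF V, (Lg.toFinset.inf' hgne (fun c => val (ℓ ⊔ c))) ^ z ≤
        ∑ ℓ ∈ leavesF V, (C.inf' hC (fun c => val (ℓ ⊔ c))) ^ z := by
  intro C hC hCleaf hCcard
  have hconv : ∀ (S : Finset V) (hS : S.Nonempty) (ℓ : V),
      S.inf' hS (fun c => val (ℓ ⊔ c)) = mvf val S ℓ := by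
    intro S hS ℓ
    refine le_antisymm ?_ ?_
    · refine le_mvf ?_ ?_
      · obtain ⟨c, hc⟩ := hS
        exact (Finset.inf'_le _ hc).trans (hmono _ _ le_top)
      · intro x hx; exact Finset.inf'_le _ hx
    · refine Finset.le_inf' _ _ ?_
      intro x hx; exact mvf_le_of_mem hx
  have main : ∀ j : ℕ, j ≤ k → ∀ C' : Finset V, (∀ c ∈ C', IsLeaf c) → C'.card = j →
      ∑ ℓ ∈ leavesF V, mvf val Lg.toFinset ℓ ^ z ≤
        ∑ ℓ ∈ leavesF V, mvf val ((Lg.take (k - j)).toFinset ∪ C') ℓ ^ z := by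
    intro j
    induction j with
    | zero =>
      intro _ C' _ hcard
      rw [Finset.card_eq_zero] at hcard
      subst hcard
      rw [Nat.sub_zero, ← hlen, List.take_length, Finset.union_empty]
    | succ j ih =>
      intro hjk C' hC'leaf hcard
      have hCne : C'.Nonempty := Finset.card_pos.1 (by omega)
      have hik : k - (j+1) < Lg.length := by omega
      obtain ⟨o, hoC, hex⟩ := exchange htree val hval0 hmono parent hpar z hbe Lg
        (k - (j+1)) hik (hgreedy _ hik) C' hCne hC'leaf
      have h2 : (Lg.take (k - j)).toFinset
          = insert (Lg.get ⟨k - (j+1), hik⟩) (Lg.take (k - (j+1))).toFinset := by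
        have h1 : k - j = (k - (j+1)) + 1 := by omega
        rw [h1, ← List.take_concat_get hik, List.concat_eq_append, List.toFinset_append]
        rw [Finset.union_comm]
        simp [Finset.insert_eq, -Finset.singleton_union]
      have hih := ih (by omega) (C'.erase o)
        (fun c hc => hC'leaf c (Finset.mem_of_mem_erase hc))
        (by rw [Finset.card_erase_of_mem hoC, hcard]; omega)
      refine hih.trans ?_
      refine le_trans (le_of_eq ?_) hex
      rw [h2, Finset.insert_union]
  have h := main k le_rfl C hCleaf hCcard
  rw [Nat.sub_self] at h
  simp only [List.take_zero, List.toFinset_nil, Finset.empty_union] at h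
  calc ∑ ℓ ∈ leavesF V, (Lg.toFinset.inf' hgne (fun c => val (ℓ ⊔ c))) ^ z
      = ∑ ℓ ∈ leavesF V, mvf val Lg.toFinset ℓ ^ z := by
        refine Finset.sum_congr rfl ?_
        intro ℓ _
        rw [hconv _ hgne ℓ]
    _ ≤ ∑ ℓ ∈ leavesF V, mvf val C ℓ ^ z := h
    _ = ∑ ℓ ∈ leavesF V, (C.inf' hC (fun c => val (ℓ ⊔ c))) ^ z := by
        refine Finset.sum_congr rfl ?_
        intro ℓ _
        rw [hconv _ hC ℓ]
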